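/- If b is an even function on the unit circle, then (T(a) − H(a))(T(b) − H(b)) = T(ab) − H(ab) for any bounded a. -/

import Mathlib

/-- The product symbol: the Fourier coefficients of `a*b` are the convolution
of those of `a` and `b`. -/
noncomputable def conv (a b : ℤ → ℂ) : ℤ → ℂ := fun n => ∑' k : ℤ, a k * b (n - k)

/-- The Toeplitz matrix `(a_{j-k})_{j,k ≥ 0}` of a symbol given by its Fourier coefficients. -/
def Tmat (a : ℤ → ℂ) : ℕ → ℕ → ℂ := fun j k => a ((j : ℤ) - (k : ℤ))

/-- The Hankel matrix `(a_{j+k+1})_{j,k ≥ 0}`. -/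
def Hmat (a : ℤ → ℂ) : ℕ → ℕ → ℂ := fun j k => a ((j : ℤ) + (k : ℤ) + 1)

/-- The flip `ã(e^{iθ}) = a(e^{-iθ})`, on the level of Fourier coefficients. -/
def flip' (a : ℤ → ℂ) : ℤ → ℂ := fun n => a (-n)

/-- Product of infinite matrices (entrywise, via absolutely convergent series). -/
noncomputable def mulM (A B : ℕ → ℕ → ℂ) : ℕ → ℕ → ℂ := fun j k => ∑' i : ℕ, A j i * B i k

/-- For even `b`: `(T(a)-H(a))(T(b)-H(b)) = T(ab)-H(ab)`. -/
theorem M_minus_multiplicative (a b : ℤ → ℂ)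
    (ha : Summable fun n => ‖a n‖) (hb : Summable fun n => ‖b n‖)
    (hbe : ∀ n : ℤ, b (-n) = b n) :
    ∀ j k : ℕ, mulM (fun j k => Tmat a j k - Hmat a j k)
        (fun j k => Tmat b j k - Hmat b j k) j k
      = Tmat (conv a b) j k - Hmat (conv a b) j k := by
  intro j k
  set C := ∑' n : ℤ, ‖b n‖ with hC
  have hbC : ∀ m : ℤ, ‖b m‖ ≤ C := fun m => Summable.le_tsum hb m (fun _ _ => norm_nonneg _)
  -- summability of products against a shifted/reindexed `a`
  have key : ∀ {ι : Type} (g : ι → ℤ), Function.Injective g → ∀ (c : ι → ℂ),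
      (∀ n, ‖c n‖ ≤ 2 * C) → Summable fun n : ι => a (g n) * c n := by
    intro ι g hg c hc
    refine Summable.of_norm (Summable.of_nonneg_of_le (fun n => norm_nonneg _)
      (fun n => ?_) ((ha.comp_injective hg).mul_right (2 * C)))
    rw [norm_mul]
    exact mul_le_mul_of_nonneg_left (hc n) (norm_nonneg _)
  have hbound : ∀ m m' : ℤ, ‖b m - b m'‖ ≤ 2 * C := by
    intro m m'
    calc ‖b m - b m'‖ ≤ ‖b m‖ + ‖b m'‖ := norm_sub_le _ _
    _ ≤ C + C := add_le_add (hbC m) (hbC m')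
    _ = 2 * C := by ring
  have hone : ∀ m : ℤ, ‖b m‖ ≤ 2 * C := by
    intro m
    have := hbC m
    have h0 : (0:ℝ) ≤ C := le_trans (norm_nonneg _) (hbC 0)
    linarith
  have hS1 : ∀ c : ℤ, Summable fun n : ℤ => a n * b (c - n) := by
    intro c
    exact key id (fun x y h => h) _ (fun n => hone _)
  set A : ℤ := (j : ℤ) - (k : ℤ) with hA
  set B : ℤ := (j : ℤ) + (k : ℤ) + 1 with hB
  set F : ℤ → ℂ := fun n => a n * (b (A - n) - b (B - n)) with hF
  have hFsum : Summable F := key id (fun x y h => h) _ (fun n => hbound _ _)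
  -- RHS as a single tsum over ℤ
  have hRHS : Tmat (conv a b) j k - Hmat (conv a b) j k = ∑' n : ℤ, F n := by
    simp only [Tmat, Hmat, conv, hF]
    rw [← Summable.tsum_sub (hS1 A) (hS1 B)]
    congr 1
    funext n
    ring
  rw [hRHS]
  -- reindex by n ↦ j - n
  have hreidx : ∑' n : ℤ, F n = ∑' n : ℤ, F ((j : ℤ) - n) :=
    ((Equiv.subLeft (j : ℤ)).tsum_eq F).symm
  -- split ℤ into ℕ and negatives
  set f : ℕ → ℂ := fun i => a ((j : ℤ) - i) * (b ((i : ℤ) - k) - b ((i : ℤ) + k + 1)) with hf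
  set g : ℕ → ℂ := fun m => a ((j : ℤ) + m + 1) * (b ((m : ℤ) + k + 1) - b ((m : ℤ) - k)) with hg
  have hFrec : (fun n : ℤ => F ((j : ℤ) - n)) = Int.rec f g := by
    funext n
    cases n with
    | ofNat n =>
      show F ((j : ℤ) - n) = f n
      simp only [hF, hf]
      congr 2 <;> simp only [hA, hB] <;> ring_nf
    | negSucc n =>
      show F ((j : ℤ) - Int.negSucc n) = g n
      simp only [hF, hg, Int.negSucc_eq]
      have e1 : (j : ℤ) - -((n : ℤ) + 1) = (j : ℤ) + n + 1 := by ring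
      have e2 : A - ((j : ℤ) + n + 1) = -((n : ℤ) + k + 1) := by rw [hA]; ring
      have e3 : B - ((j : ℤ) + n + 1) = -((n : ℤ) - k) := by rw [hB]; ring
      rw [e1, e2, e3, hbe, hbe]
  have hfs : Summable f := by
    refine key (fun i : ℕ => (j : ℤ) - i) ?_ _ (fun n => hbound _ _)
    intro x y h
    simpa using h
  have hgs : Summable g := by
    refine key (fun m : ℕ => (j : ℤ) + m + 1) ?_ _ (fun n => hbound _ _)
    intro x y h
    simpa using h
  rw [hreidx, hFrec, tsum_int_rec hfs hgs]
  -- now compute the LHS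
  simp only [mulM, Tmat, Hmat]
  have hgneg : g = fun m : ℕ => -(a ((j : ℤ) + m + 1) * (b ((m : ℤ) - k) - b ((m : ℤ) + k + 1))) := by
    funext m; simp only [hg]; ring
  rw [hgneg, tsum_neg, ← sub_eq_add_neg]
  have hgs' : Summable fun m : ℕ => a ((j : ℤ) + m + 1) * (b ((m : ℤ) - k) - b ((m : ℤ) + k + 1)) := by
    refine key (fun m : ℕ => (j : ℤ) + m + 1) ?_ _ (fun n => hbound _ _)
    intro x y h
    simpa using h
  rw [← Summable.tsum_sub hfs hgs']
  congr 1
  funext i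
  simp only [hf]
  ring
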